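/- The polytope Δ_2 in R^4 given as the convex hull of the columns (0,0,1,0), (4,-2,-1,-2), (-2,2,-1,0), (0,0,0,1), (0,1,0,0), (-2,-2,2,1), (1,0,0,0) has exactly one interior lattice point, namely the origin. -/

import Mathlib

open Finset Set

/-- If a linear functional `x ↦ ∑ aᵢ xᵢ` is `≤ 1` on `S` and takes value `1` somewhere,
then it is `< 1` on the interior of the convex hull of `S`. -/
lemma interior_hull_strict (a w : Fin 4 → ℝ) (hw : ∑ i, a i * w i = 1)
    {S : Set (Fin 4 → ℝ)} (hS : ∀ x ∈ S, ∑ i, a i * x i ≤ 1) :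
    ∀ x ∈ interior (convexHull ℝ S), ∑ i, a i * x i < 1 := by
  set L : (Fin 4 → ℝ) →L[ℝ] ℝ := ∑ i, a i • ContinuousLinearMap.proj i with hLdef
  have hL : ∀ x, L x = ∑ i, a i * x i := by
    intro x
    simp [hLdef, ContinuousLinearMap.sum_apply, ContinuousLinearMap.proj_apply, smul_eq_mul]
  have hsurj : Function.Surjective L := by
    intro r
    refine ⟨r • w, ?_⟩
    rw [hL]
    simp only [Pi.smul_apply, smul_eq_mul]
    have h : ∀ i ∈ Finset.univ, a i * (r * w i) = r * (a i * w i) := fun i _ => by ring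
    rw [Finset.sum_congr rfl h, ← Finset.mul_sum, hw, mul_one]
  have hsub : convexHull ℝ S ⊆ L ⁻¹' Set.Iic 1 := by
    apply convexHull_min
    · intro x hx
      simpa [hL] using hS x hx
    · exact (convex_Iic (1 : ℝ)).linear_preimage (L : (Fin 4 → ℝ) →ₗ[ℝ] ℝ)
  intro x hx
  have h2 : x ∈ interior (L ⁻¹' Set.Iic 1) := interior_mono hsub hx
  rw [L.interior_preimage hsurj, interior_Iic] at h2
  simpa [hL] using h2

/-- The five auxiliary points in `Δ₂` forming a simplex with barycenter `0`. -/
noncomputable def qpts : Fin 5 → (Fin 4 → ℝ) :=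
  ![![10/3, -3/2, -5/6, -5/3], ![-5/3, 11/6, -5/6, 0], ![0, 1/6, 0, 5/6],
    ![-5/3, -3/2, 5/3, 5/6], ![0, 1, 0, 0]]

set_option maxHeartbeats 1000000 in
/-- The polytope `Δ₂ ⊂ ℝ⁴`, the convex hull of the columns `(0,0,1,0)`, `(4,-2,-1,-2)`,
`(-2,2,-1,0)`, `(0,0,0,1)`, `(0,1,0,0)`, `(-2,-2,2,1)`, `(1,0,0,0)`, has exactly one
interior lattice point, namely the origin. -/
theorem delta2_unique_interior_lattice_point :
    {v : Fin 4 → ℤ | (fun i => (v i : ℝ)) ∈ interior (convexHull ℝ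
      ({![0,0,1,0], ![4,-2,-1,-2], ![-2,2,-1,0], ![0,0,0,1],
        ![0,1,0,0], ![-2,-2,2,1], ![1,0,0,0]} : Set (Fin 4 → ℝ)))} = {0} := by
  set S : Set (Fin 4 → ℝ) := {![0,0,1,0], ![4,-2,-1,-2], ![-2,2,-1,0], ![0,0,0,1],
        ![0,1,0,0], ![-2,-2,2,1], ![1,0,0,0]} with hSdef
  ext v
  simp only [Set.mem_setOf_eq, Set.mem_singleton_iff]
  constructor
  · -- forward: interior lattice points are 0
    intro hv
    have key : ∀ (a w : Fin 4 → ℝ), (∑ i, a i * w i = 1) → (∀ x ∈ S, ∑ i, a i * x i ≤ 1) →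
        a 0 * (v 0 : ℝ) + a 1 * v 1 + a 2 * v 2 + a 3 * v 3 < 1 := by
      intro a w hw hS'
      have := interior_hull_strict a w hw hS' _ hv
      simpa [Fin.sum_univ_four] using this
    have h1 := key ![1,1,1,1] ![1,0,0,0] (by norm_num [Fin.sum_univ_four, Matrix.cons_val_two, Matrix.cons_val_three, Matrix.vecHead, Matrix.vecTail])
      (by rintro x (rfl|rfl|rfl|rfl|rfl|rfl|rfl) <;> norm_num [Fin.sum_univ_four, Matrix.cons_val_two, Matrix.cons_val_three, Matrix.vecHead, Matrix.vecTail])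
    have h2 := key ![1,1,1,0] ![1,0,0,0] (by norm_num [Fin.sum_univ_four, Matrix.cons_val_two, Matrix.cons_val_three, Matrix.vecHead, Matrix.vecTail])
      (by rintro x (rfl|rfl|rfl|rfl|rfl|rfl|rfl) <;> norm_num [Fin.sum_univ_four, Matrix.cons_val_two, Matrix.cons_val_three, Matrix.vecHead, Matrix.vecTail])
    have h3 := key ![1,1,-1,1] ![1,0,0,0] (by norm_num [Fin.sum_univ_four, Matrix.cons_val_two, Matrix.cons_val_three, Matrix.vecHead, Matrix.vecTail])
      (by rintro x (rfl|rfl|rfl|rfl|rfl|rfl|rfl) <;> norm_num [Fin.sum_univ_four, Matrix.cons_val_two, Matrix.cons_val_three, Matrix.vecHead, Matrix.vecTail])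
    have h4 := key ![1,0,1,1] ![1,0,0,0] (by norm_num [Fin.sum_univ_four, Matrix.cons_val_two, Matrix.cons_val_three, Matrix.vecHead, Matrix.vecTail])
      (by rintro x (rfl|rfl|rfl|rfl|rfl|rfl|rfl) <;> norm_num [Fin.sum_univ_four, Matrix.cons_val_two, Matrix.cons_val_three, Matrix.vecHead, Matrix.vecTail])
    have h5 := key ![0,1,1,1] ![0,1,0,0] (by norm_num [Fin.sum_univ_four, Matrix.cons_val_two, Matrix.cons_val_three, Matrix.vecHead, Matrix.vecTail])
      (by rintro x (rfl|rfl|rfl|rfl|rfl|rfl|rfl) <;> norm_num [Fin.sum_univ_four, Matrix.cons_val_two, Matrix.cons_val_three, Matrix.vecHead, Matrix.vecTail])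
    have h6 := key ![0,1,1,-2] ![0,1,0,0] (by norm_num [Fin.sum_univ_four, Matrix.cons_val_two, Matrix.cons_val_three, Matrix.vecHead, Matrix.vecTail])
      (by rintro x (rfl|rfl|rfl|rfl|rfl|rfl|rfl) <;> norm_num [Fin.sum_univ_four, Matrix.cons_val_two, Matrix.cons_val_three, Matrix.vecHead, Matrix.vecTail])
    have h7 := key ![-1,0,1,-3] ![0,0,1,0] (by norm_num [Fin.sum_univ_four, Matrix.cons_val_two, Matrix.cons_val_three, Matrix.vecHead, Matrix.vecTail])
      (by rintro x (rfl|rfl|rfl|rfl|rfl|rfl|rfl) <;> norm_num [Fin.sum_univ_four, Matrix.cons_val_two, Matrix.cons_val_three, Matrix.vecHead, Matrix.vecTail])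
    have h8 := key ![-1,-2,-3,1] ![0,0,0,1] (by norm_num [Fin.sum_univ_four, Matrix.cons_val_two, Matrix.cons_val_three, Matrix.vecHead, Matrix.vecTail])
      (by rintro x (rfl|rfl|rfl|rfl|rfl|rfl|rfl) <;> norm_num [Fin.sum_univ_four, Matrix.cons_val_two, Matrix.cons_val_three, Matrix.vecHead, Matrix.vecTail])
    norm_num [Matrix.cons_val_two, Matrix.cons_val_three, Matrix.vecHead, Matrix.vecTail] at h1 h2 h3 h4 h5 h6 h7 h8
    have r1 : (v 0 : ℝ) + v 1 + v 2 + v 3 < 1 := by linarith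
    have r2 : (v 0 : ℝ) + v 1 + v 2 < 1 := by linarith
    have r3 : (v 0 : ℝ) + v 1 - v 2 + v 3 < 1 := by linarith
    have r4 : (v 0 : ℝ) + v 2 + v 3 < 1 := by linarith
    have r5 : (v 1 : ℝ) + v 2 + v 3 < 1 := by linarith
    have r6 : (v 1 : ℝ) + v 2 - 2 * v 3 < 1 := by linarith
    have r7 : -(v 0 : ℝ) + v 2 - 3 * v 3 < 1 := by linarith
    have r8 : -(v 0 : ℝ) - 2 * v 1 - 3 * v 2 + v 3 < 1 := by linarith
    have g1 : v 0 + v 1 + v 2 + v 3 < 1 := by exact_mod_cast r1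
    have g2 : v 0 + v 1 + v 2 < 1 := by exact_mod_cast r2
    have g3 : v 0 + v 1 - v 2 + v 3 < 1 := by exact_mod_cast r3
    have g4 : v 0 + v 2 + v 3 < 1 := by exact_mod_cast r4
    have g5 : v 1 + v 2 + v 3 < 1 := by exact_mod_cast r5
    have g6 : v 1 + v 2 - 2 * v 3 < 1 := by exact_mod_cast r6
    have g7 : -v 0 + v 2 - 3 * v 3 < 1 := by exact_mod_cast r7
    have g8 : -v 0 - 2 * v 1 - 3 * v 2 + v 3 < 1 := by exact_mod_cast r8
    funext i
    fin_cases i <;> simp <;> omega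
  · -- backward: 0 is an interior point
    rintro rfl
    have ind : AffineIndependent ℝ qpts := by
      rw [affineIndependent_iff_linearIndependent_vsub ℝ qpts (4 : Fin 5),
        ← linearIndependent_equiv (finSuccAboveEquiv (4 : Fin 5))]
      have heq : ((fun (i : {x : Fin 5 // x ≠ 4}) => qpts ↑i -ᵥ qpts 4) ∘
          (finSuccAboveEquiv (4 : Fin 5))) = fun i : Fin 4 =>
          (!![10/3, -5/2, -5/6, -5/3; -5/3, 5/6, -5/6, 0; 0, -5/6, 0, 5/6;
             -5/3, -5/2, 5/3, 5/6] : Matrix (Fin 4) (Fin 4) ℝ) i := by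
        funext i
        simp only [Function.comp_apply, finSuccAboveEquiv_apply, vsub_eq_sub]
        fin_cases i <;>
          · funext j
            fin_cases j <;>
              norm_num [qpts, Pi.sub_apply,
                show Fin.succAbove (4:Fin 5) 0 = 0 from rfl,
                show Fin.succAbove (4:Fin 5) 1 = 1 from rfl,
                show Fin.succAbove (4:Fin 5) 2 = 2 from rfl,
                show Fin.succAbove (4:Fin 5) 3 = 3 from rfl,
                show Fin.succAbove (4:Fin 5) ⟨2, by omega⟩ = 2 from rfl,
                show Fin.succAbove (4:Fin 5) ⟨3, by omega⟩ = 3 from rfl,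
                Matrix.vecHead, Matrix.vecTail, Matrix.cons_val_two, Matrix.cons_val_three,
                Matrix.cons_val_four]
      rw [heq]
      apply Matrix.linearIndependent_rows_iff_isUnit.2
      have hMN : (!![10/3, -5/2, -5/6, -5/3; -5/3, 5/6, -5/6, 0; 0, -5/6, 0, 5/6;
             -5/3, -5/2, 5/3, 5/6] : Matrix (Fin 4) (Fin 4) ℝ) *
          !![0, -2/5, 1/5, -1/5; -1/5, -1/5, -1/5, -1/5; -1/5, -3/5, -3/5, 1/5;
             -1/5, -1/5, 1, -1/5] = 1 := by
        ext i j
        fin_cases i <;> fin_cases j <;>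
          norm_num [Matrix.mul_apply, Fin.sum_univ_four, Matrix.one_apply, Fin.ext_iff,
            Matrix.vecHead, Matrix.vecTail, Matrix.cons_val_two, Matrix.cons_val_three]
      have := invertibleOfRightInverse (h := hMN)
      exact isUnit_of_invertible _
    have tot : affineSpan ℝ (Set.range qpts) = ⊤ := by
      rw [ind.affineSpan_eq_top_iff_card_eq_finrank_add_one]
      simp [Module.finrank_pi]
    let b : AffineBasis (Fin 5) ℝ (Fin 4 → ℝ) := ⟨qpts, ind, tot⟩
    have hcent : Finset.univ.centroid ℝ qpts = 0 := by
      rw [Finset.centroid_def,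
        Finset.affineCombination_eq_linear_combination _ _ _ (by
          simp [Finset.centroidWeights_apply])]
      funext j
      fin_cases j <;>
        · simp [Fin.sum_univ_five, Finset.centroidWeights_apply, qpts]
          norm_num
    have hmem := b.centroid_mem_interior_convexHull
    have hb : ⇑b = qpts := rfl
    rw [hb, hcent] at hmem
    have hrange : Set.range qpts ⊆ convexHull ℝ S := by
      rintro x ⟨i, rfl⟩
      have hc := convex_convexHull ℝ S
      have m2 : (![4,-2,-1,-2] : Fin 4 → ℝ) ∈ convexHull ℝ S :=
        subset_convexHull ℝ S (by simp [hSdef])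
      have m3 : (![-2,2,-1,0] : Fin 4 → ℝ) ∈ convexHull ℝ S :=
        subset_convexHull ℝ S (by simp [hSdef])
      have m4 : (![0,0,0,1] : Fin 4 → ℝ) ∈ convexHull ℝ S :=
        subset_convexHull ℝ S (by simp [hSdef])
      have m5 : (![0,1,0,0] : Fin 4 → ℝ) ∈ convexHull ℝ S :=
        subset_convexHull ℝ S (by simp [hSdef])
      have m6 : (![-2,-2,2,1] : Fin 4 → ℝ) ∈ convexHull ℝ S :=
        subset_convexHull ℝ S (by simp [hSdef])
      fin_cases i
      · have := hc m2 m5 (by norm_num : (0:ℝ) ≤ 5/6) (by norm_num : (0:ℝ) ≤ 1/6) (by norm_num)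
        convert this using 1
        funext j; fin_cases j <;> norm_num [qpts]
      · have := hc m3 m5 (by norm_num : (0:ℝ) ≤ 5/6) (by norm_num : (0:ℝ) ≤ 1/6) (by norm_num)
        convert this using 1
        funext j; fin_cases j <;> norm_num [qpts]
      · have := hc m4 m5 (by norm_num : (0:ℝ) ≤ 5/6) (by norm_num : (0:ℝ) ≤ 1/6) (by norm_num)
        convert this using 1
        funext j; fin_cases j <;> norm_num [qpts]
      · have := hc m6 m5 (by norm_num : (0:ℝ) ≤ 5/6) (by norm_num : (0:ℝ) ≤ 1/6) (by norm_num)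
        convert this using 1
        funext j; fin_cases j <;> norm_num [qpts]
      · exact m5
    have hsub : convexHull ℝ (Set.range qpts) ⊆ convexHull ℝ S :=
      convexHull_min hrange (convex_convexHull ℝ S)
    have h0 : (fun i => (((0 : Fin 4 → ℤ)) i : ℝ)) = (0 : Fin 4 → ℝ) := by
      funext i; simp
    rw [h0]
    exact interior_mono hsub hmem
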